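/- arXiv:math/0702364 — 2 statements merged into one kernel-verified Lean document; each statement's English description precedes it below -/
import Mathlib

section
/- Let (Ω, F, (Fₙ)_{n∈ℕ}, P) be a filtered probability space and let (Mₙ)_{n∈ℕ} be a martingale with respect to (Fₙ) with M₀ = 0 and |M_{n+1} − Mₙ| ≤ A almost surely for all n, where A > 0. Define the predictable quadratic variation Vₙ = Σ_{k=0}^{n−1} E[(M_{k+1} − M_k)² | F_k]. Fix θ with 0 < θ < 1/A and set α = θ²/(2(1 − θA)). Then the process Zₙ = exp(θMₙ − αVₙ) is a supermartingale with respect to (Fₙ). -/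
open MeasureTheory Finset Nat

lemma exp_key_ineq {c : ℝ} (hc0 : 0 ≤ c) (hc1 : c < 1) {x : ℝ} (hx : |x| ≤ c) :
    Real.exp x ≤ 1 + x + x ^ 2 / (2 * (1 - c)) := by
  have hsum : Summable fun n : ℕ => x ^ n / (n ! : ℝ) := NormedSpace.expSeries_div_summable x
  have hexp : Real.exp x = ∑' n : ℕ, x ^ n / (n ! : ℝ) := by
    rw [Real.exp_eq_exp_ℝ, NormedSpace.exp_eq_tsum_div]
  have hsplit : ∑' n : ℕ, x ^ n / (n ! : ℝ) =
      (∑ i ∈ range 2, x ^ i / (i ! : ℝ)) + ∑' n : ℕ, x ^ (n + 2) / ((n+2)! : ℝ) :=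
    (Summable.sum_add_tsum_nat_add 2 hsum).symm
  have hgeom : Summable fun n : ℕ => x ^ 2 / 2 * c ^ n :=
    (summable_geometric_of_lt_one hc0 hc1).mul_left _
  have hterm : ∀ n : ℕ, x ^ (n + 2) / ((n+2)! : ℝ) ≤ x ^ 2 / 2 * c ^ n := by
    intro n
    have hfac : (2 : ℝ) ≤ ((n+2)! : ℝ) := by
      have : 2 ! ≤ (n+2)! := Nat.factorial_le (by omega)
      exact_mod_cast this
    have hnum : x ^ (n + 2) ≤ x ^ 2 * c ^ n := by
      calc x ^ (n + 2) ≤ |x ^ (n + 2)| := le_abs_self _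
        _ = |x| ^ 2 * |x| ^ n := by rw [abs_pow]; ring
        _ ≤ |x| ^ 2 * c ^ n := by gcongr
        _ = x ^ 2 * c ^ n := by rw [sq_abs]
    calc x ^ (n + 2) / ((n+2)! : ℝ) ≤ x ^ 2 * c ^ n / 2 :=
          div_le_div₀ (by positivity) hnum two_pos hfac
      _ = x ^ 2 / 2 * c ^ n := by ring
  have htail : ∑' n : ℕ, x ^ (n + 2) / ((n+2)! : ℝ) ≤ ∑' n : ℕ, x ^ 2 / 2 * c ^ n :=
    Summable.tsum_le_tsum hterm ((summable_nat_add_iff 2).2 hsum) hgeom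
  have hgsum : ∑' n : ℕ, x ^ 2 / 2 * c ^ n = x ^ 2 / (2 * (1 - c)) := by
    rw [tsum_mul_left, tsum_geometric_of_lt_one hc0 hc1]
    field_simp
  rw [hexp, hsplit]
  simp [Finset.sum_range_succ]
  rw [hgsum] at htail
  linarith [htail]


theorem stmt_1 {Ω : Type*} {m0 : MeasurableSpace Ω} {μ : Measure Ω}
    [IsProbabilityMeasure μ] (F : Filtration ℕ m0)
    (M : ℕ → Ω → ℝ) (hM : Martingale M F μ) (hM0 : ∀ ω, M 0 ω = 0)
    (A : ℝ) (hA : 0 < A)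
    (hbdd : ∀ n, ∀ᵐ ω ∂μ, |M (n + 1) ω - M n ω| ≤ A)
    (θ α : ℝ) (hθ : 0 < θ) (hθA : θ < 1 / A)
    (hα : α = θ ^ 2 / (2 * (1 - θ * A)))
    (V : ℕ → Ω → ℝ)
    (hV : ∀ n ω, V n ω =
      ∑ k ∈ Finset.range n, (μ[fun ω' => (M (k + 1) ω' - M k ω') ^ 2 | F k]) ω) :
    Supermartingale (fun n ω => Real.exp (θ * M n ω - α * V n ω)) F μ := by
  have hθA1 : θ * A < 1 := (lt_div_iff₀ hA).mp hθA
  have hθA0 : 0 ≤ θ * A := le_of_lt (mul_pos hθ hA)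
  have hαpos : 0 < α := by
    rw [hα]
    have h1 : 0 < 1 - θ * A := by linarith
    exact div_pos (by positivity) (by linarith)
  -- notation
  set Q : ℕ → Ω → ℝ := fun k => μ[fun ω' => (M (k + 1) ω' - M k ω') ^ 2 | F k] with hQdef
  -- strong measurability
  have hsmM : ∀ k, StronglyMeasurable (M k) := fun k => (hM.stronglyAdapted k).mono (F.le k)
  have hsmQF : ∀ k, StronglyMeasurable[F k] (Q k) := fun k => stronglyMeasurable_condExp
  have hsmVF : ∀ n, StronglyMeasurable[F n] (V n) := by
    intro n
    have : V n = fun ω => ∑ k ∈ Finset.range n, Q k ω := funext (hV n)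
    rw [this]
    apply Finset.stronglyMeasurable_fun_sum
    intro k hk
    exact (hsmQF k).mono (F.mono (le_of_lt (Finset.mem_range.mp hk)))
  have hadp : StronglyAdapted F (fun n ω => Real.exp (θ * M n ω - α * V n ω)) := by
    intro n
    exact Real.continuous_exp.comp_stronglyMeasurable
      (((hM.stronglyAdapted n).const_mul θ).sub ((hsmVF n).const_mul α))
  -- integrability of squares of increments
  have hD2int : ∀ n, Integrable (fun ω' => (M (n + 1) ω' - M n ω') ^ 2) μ := by
    intro n
    refine Integrable.mono' (integrable_const (A ^ 2))
      (((hsmM (n+1)).sub (hsmM n)).pow 2).aestronglyMeasurable ?_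
    filter_upwards [hbdd n] with ω hω
    rw [Real.norm_eq_abs, abs_pow]
    exact pow_le_pow_left₀ (abs_nonneg _) hω 2
  have hQnonneg : ∀ n, ∀ᵐ ω ∂μ, 0 ≤ Q n ω := by
    intro n
    have := condExp_nonneg (m := F n) (μ := μ)
      (f := fun ω' => (M (n + 1) ω' - M n ω') ^ 2) (Filter.Eventually.of_forall fun ω => sq_nonneg _)
    filter_upwards [this] with ω hω using hω
  have hVnonneg : ∀ n, ∀ᵐ ω ∂μ, 0 ≤ V n ω := by
    intro n
    have : ∀ᵐ ω ∂μ, ∀ k, 0 ≤ Q k ω := ae_all_iff.2 hQnonneg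
    filter_upwards [this] with ω hω
    rw [hV n ω]
    exact Finset.sum_nonneg fun k _ => hω k
  have hMbound : ∀ n, ∀ᵐ ω ∂μ, |M n ω| ≤ n * A := by
    intro n
    induction n with
    | zero => filter_upwards with ω; simp [hM0]
    | succ n ih =>
      filter_upwards [ih, hbdd n] with ω h1 h2
      have : |M (n + 1) ω| ≤ |M n ω| + |M (n + 1) ω - M n ω| := by
        calc |M (n + 1) ω| = |M n ω + (M (n + 1) ω - M n ω)| := by ring_nf
          _ ≤ |M n ω| + |M (n + 1) ω - M n ω| := abs_add_le _ _
      push_cast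
      calc |M (n+1) ω| ≤ n * A + A := this.trans (add_le_add h1 h2)
        _ = (n + 1) * A := by ring
  -- integrability of Z n
  have hZint : ∀ n, Integrable (fun ω => Real.exp (θ * M n ω - α * V n ω)) μ := by
    intro n
    refine Integrable.mono' (integrable_const (Real.exp (θ * (n * A))))
      ((hadp n).mono (F.le n)).aestronglyMeasurable ?_
    filter_upwards [hMbound n, hVnonneg n] with ω h1 h2
    rw [Real.norm_eq_abs, abs_of_pos (Real.exp_pos _), Real.exp_le_exp]
    have : θ * M n ω ≤ θ * (n * A) := by
      apply mul_le_mul_of_nonneg_left ((le_abs_self _).trans h1) (le_of_lt hθ)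
    nlinarith
  refine supermartingale_nat hadp hZint ?_
  intro n
  -- the one-step inequality
  set D : Ω → ℝ := fun ω => M (n + 1) ω - M n ω with hDdef
  set g : Ω → ℝ := fun ω => Real.exp (θ * D ω) with hgdef
  set W : Ω → ℝ := fun ω => Real.exp (θ * M n ω - α * V n ω - α * Q n ω) with hWdef
  have hDint : Integrable D μ := (hM.integrable (n+1)).sub (hM.integrable n)
  have hsmW : StronglyMeasurable[F n] W :=
    Real.continuous_exp.comp_stronglyMeasurable
      ((((hM.stronglyAdapted n).const_mul θ).sub ((hsmVF n).const_mul α)).sub ((hsmQF n).const_mul α))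
  have hsmg : StronglyMeasurable g :=
    Real.continuous_exp.comp_stronglyMeasurable
      (((hsmM (n+1)).sub (hsmM n)).const_mul θ)
  have hgbdd : ∀ᵐ ω ∂μ, ‖g ω‖ ≤ Real.exp (θ * A) := by
    filter_upwards [hbdd n] with ω hω
    rw [Real.norm_eq_abs, abs_of_pos (Real.exp_pos _), Real.exp_le_exp]
    exact mul_le_mul_of_nonneg_left ((le_abs_self _).trans hω) (le_of_lt hθ)
  have hgint : Integrable g μ :=
    Integrable.mono' (integrable_const _) hsmg.aestronglyMeasurable hgbdd
  have hWgint : Integrable (W * g) μ := by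
    refine Integrable.mono' (integrable_const (Real.exp (θ * (n * A)) * Real.exp (θ * A)))
      ((hsmW.mono (F.le n)).mul hsmg).aestronglyMeasurable ?_
    filter_upwards [hMbound n, hVnonneg n, hQnonneg n, hbdd n] with ω h1 h2 h3 h4
    rw [Pi.mul_apply, norm_mul]
    apply mul_le_mul ?_ ?_ (norm_nonneg _) (le_of_lt (Real.exp_pos _))
    · rw [Real.norm_eq_abs, abs_of_pos (Real.exp_pos _), Real.exp_le_exp]
      have : θ * M n ω ≤ θ * (n * A) :=
        mul_le_mul_of_nonneg_left ((le_abs_self _).trans h1) (le_of_lt hθ)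
      nlinarith
    · rw [Real.norm_eq_abs, abs_of_pos (Real.exp_pos _), Real.exp_le_exp]
      exact mul_le_mul_of_nonneg_left ((le_abs_self _).trans h4) (le_of_lt hθ)
  -- Z (n+1) = W * g
  have hZsucc : (fun ω => Real.exp (θ * M (n+1) ω - α * V (n+1) ω)) = W * g := by
    funext ω
    rw [Pi.mul_apply, hWdef, hgdef, ← Real.exp_add]
    congr 1
    have hVsucc : V (n + 1) ω = V n ω + Q n ω := by
      rw [hV (n+1) ω, hV n ω, Finset.sum_range_succ]
    rw [hVsucc, hDdef]
    ring
  -- conditional expectation of D is 0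
  have hDcond : μ[D|F n] =ᵐ[μ] 0 := by
    have h1 : μ[D|F n] =ᵐ[μ] μ[M (n+1)|F n] - μ[M n|F n] :=
      condExp_sub (hM.integrable (n+1)) (hM.integrable n) (F n)
    have h2 : μ[M (n+1)|F n] =ᵐ[μ] M n := hM.condExp_ae_eq (Nat.le_succ n)
    have h3 : μ[M n|F n] = M n :=
      condExp_of_stronglyMeasurable (F.le n) (hM.stronglyAdapted n) (hM.integrable n)
    filter_upwards [h1, h2] with ω hω1 hω2
    rw [hω1, Pi.sub_apply, hω2, h3, Pi.zero_apply, sub_self]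
  -- pointwise exponential inequality
  have hcomp : g ≤ᵐ[μ] fun ω => 1 + θ * D ω + α * D ω ^ 2 := by
    filter_upwards [hbdd n] with ω hω
    have hxb : |θ * D ω| ≤ θ * A := by
      rw [abs_mul, abs_of_pos hθ]
      exact mul_le_mul_of_nonneg_left hω (le_of_lt hθ)
    have := exp_key_ineq hθA0 hθA1 hxb
    calc g ω = Real.exp (θ * D ω) := rfl
      _ ≤ 1 + θ * D ω + (θ * D ω) ^ 2 / (2 * (1 - θ * A)) := this
      _ = 1 + θ * D ω + α * D ω ^ 2 := by rw [hα]; ring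
  have hrhsint : Integrable (fun ω => 1 + θ * D ω + α * D ω ^ 2) μ := by
    have h2 : Integrable (fun ω => D ω ^ 2) μ := hD2int n
    exact ((integrable_const 1).add (hDint.const_mul θ)).add (h2.const_mul α)
  -- conditional expectation of the RHS
  have hQcond : μ[(fun ω => 1 + θ * D ω + α * D ω ^ 2)|F n] =ᵐ[μ]
      fun ω => 1 + α * Q n ω := by
    have e0 : (fun ω => 1 + θ * D ω + α * D ω ^ 2)
        = (fun ω => 1 + θ * D ω) + fun ω => α * D ω ^ 2 := rfl
    have hfint : Integrable (fun ω => 1 + θ * D ω) μ := (integrable_const 1).add (hDint.const_mul θ)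
    have e1 : μ[(fun ω => 1 + θ * D ω + α * D ω ^ 2)|F n] =ᵐ[μ]
        μ[(fun ω => 1 + θ * D ω)|F n] + μ[(fun ω => α * D ω ^ 2)|F n] := by
      rw [e0]; exact condExp_add hfint ((hD2int n).const_mul α) (F n)
    have e2 : μ[(fun ω => 1 + θ * D ω)|F n] =ᵐ[μ]
        μ[(fun _ => (1:ℝ))|F n] + μ[(fun ω => θ * D ω)|F n] :=
      condExp_add (integrable_const 1) (hDint.const_mul θ) (F n)
    have e3 : μ[(fun _ => (1:ℝ))|F n] = fun _ => (1:ℝ) := condExp_const (F.le n) 1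
    have e4 : μ[(fun ω => θ * D ω)|F n] =ᵐ[μ] fun ω => θ * (μ[D|F n]) ω := by
      have := condExp_smul (μ := μ) (m := F n) θ D
      filter_upwards [this] with ω hω
      simpa [Pi.smul_def, smul_eq_mul] using hω
    have e5 : μ[(fun ω => α * D ω ^ 2)|F n] =ᵐ[μ] fun ω => α * Q n ω := by
      have := condExp_smul (μ := μ) (m := F n) α (fun ω => D ω ^ 2)
      filter_upwards [this] with ω hω
      simpa [Pi.smul_def, smul_eq_mul, hQdef, hDdef] using hω
    filter_upwards [e1, e2, e4, e5, hDcond] with ω h1 h2 h4 h5 hD0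
    rw [h1, Pi.add_apply, h2, Pi.add_apply, e3, h4, h5, hD0]
    simp
  have hmono : μ[g|F n] ≤ᵐ[μ] μ[(fun ω => 1 + θ * D ω + α * D ω ^ 2)|F n] :=
    condExp_mono hgint hrhsint hcomp
  -- pull out W
  have hpull : μ[W * g|F n] =ᵐ[μ] W * μ[g|F n] :=
    condExp_mul_of_stronglyMeasurable_left hsmW hWgint hgint
  -- conclude
  show μ[(fun ω => Real.exp (θ * M (n+1) ω - α * V (n+1) ω))|F n] ≤ᵐ[μ]
    fun ω => Real.exp (θ * M n ω - α * V n ω)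
  rw [hZsucc]
  filter_upwards [hpull, hmono, hQcond, hQnonneg n] with ω h1 h2 h3 h4
  rw [h1, Pi.mul_apply]
  have hW0 : 0 ≤ W ω := le_of_lt (Real.exp_pos _)
  calc W ω * (μ[g|F n]) ω ≤ W ω * (1 + α * Q n ω) := by
        apply mul_le_mul_of_nonneg_left _ hW0
        exact h2.trans_eq h3
    _ ≤ W ω * Real.exp (α * Q n ω) := by
        apply mul_le_mul_of_nonneg_left _ hW0
        have := Real.add_one_le_exp (α * Q n ω)
        linarith
    _ = Real.exp (θ * M n ω - α * V n ω) := by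
        rw [hWdef, ← Real.exp_add]; ring_nf
end

section
/- Let (Ω, F, (Fₙ)_{n∈ℕ}, P) be a filtered probability space and let (Mₙ)_{n∈ℕ} be a martingale with respect to (Fₙ) with M₀ = 0 and |M_{n+1} − Mₙ| ≤ A almost surely for all n, where A > 0. Define Vₙ = Σ_{k=0}^{n−1} E[(M_{k+1} − M_k)² | F_k]. Then for every δ > 0, ρ > 0 and N ∈ ℕ, P( max_{0 ≤ n ≤ N} |Mₙ| ≥ δ and V_N < ρ ) ≤ 2 exp( − δ² / (2(Aδ + ρ)) ). -/
open MeasureTheory Finset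

lemma exp_le_quad_of_nonpos {u : ℝ} (hu : u ≤ 0) : Real.exp u ≤ 1 + u + u ^ 2 / 2 := by
  have hder : ∀ x : ℝ, HasDerivAt (fun x : ℝ => 1 + x + x ^ 2 / 2 - Real.exp x)
      (1 + x - Real.exp x) x := by
    intro x
    have h1 : HasDerivAt (fun x : ℝ => 1 + x + x ^ 2 / 2 - Real.exp x)
        (0 + 1 + (2 : ℕ) * x ^ 1 / 2 - Real.exp x) x :=
      (((hasDerivAt_const x (1:ℝ)).add (hasDerivAt_id x)).add
        ((hasDerivAt_pow 2 x).div_const 2)).sub (Real.hasDerivAt_exp x)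
    convert h1 using 1; push_cast; ring
  have hanti : Antitone (fun x : ℝ => 1 + x + x ^ 2 / 2 - Real.exp x) := by
    refine antitone_of_deriv_nonpos (fun x => (hder x).differentiableAt) (fun x => ?_)
    rw [(hder x).deriv]
    have := Real.add_one_le_exp x
    linarith
  have := hanti hu
  simp only [Real.exp_zero] at this
  nlinarith

lemma exp_le_quad {u b : ℝ} (hb : b < 1) (hub : |u| ≤ b) :
    Real.exp u ≤ 1 + u + u ^ 2 / (2 * (1 - b)) := by
  have hb0 : 0 ≤ b := le_trans (abs_nonneg u) hub
  have h1b : 0 < 1 - b := by linarith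
  rcases le_or_gt u 0 with hu | hu
  · refine (exp_le_quad_of_nonpos hu).trans ?_
    have : u ^ 2 / 2 ≤ u ^ 2 / (2 * (1 - b)) := by
      apply div_le_div_of_nonneg_left (sq_nonneg u) (by linarith) (by nlinarith)
    linarith
  · have hu0 : 0 ≤ u := hu.le
    have hub' : u ≤ b := (le_abs_self u).trans hub
    have hu1 : u ≤ 1 := hub'.trans hb.le
    -- for each n ≥ 2 : exp u ≤ 1 + u + u^2/(2(1-b)) + 2*u^n
    have key : ∀ n : ℕ, 2 ≤ n →
        Real.exp u ≤ 1 + u + u ^ 2 / (2 * (1 - b)) + 2 * u ^ n := by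
      intro n hn
      have hb' := Real.exp_bound' hu0 hu1 (n := n) (by omega)
      have hsplit : ∑ m ∈ Finset.range n, u ^ m / m.factorial
          = (1 + u) + ∑ m ∈ Finset.Ico 2 n, u ^ m / m.factorial := by
        rw [← Finset.sum_range_add_sum_Ico _ hn]
        norm_num [Finset.sum_range_succ]
      have hterm : ∀ m ∈ Finset.Ico 2 n, u ^ m / m.factorial ≤ u ^ 2 / 2 * b ^ (m - 2) := by
        intro m hm
        rw [Finset.mem_Ico] at hm
        have h2m : 2 ≤ m := hm.1
        have hfac : (2 : ℝ) ≤ m.factorial := by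
          exact_mod_cast le_trans h2m (Nat.self_le_factorial m)
        have hpow : u ^ m = u ^ 2 * u ^ (m - 2) := by
          rw [← pow_add]; congr 1; omega
        have hub2 : u ^ (m - 2) ≤ b ^ (m - 2) := pow_le_pow_left₀ hu0 hub' _
        have : u ^ m / m.factorial ≤ u ^ m / 2 :=
          div_le_div_of_nonneg_left (pow_nonneg hu0 m) (by norm_num) hfac
        refine this.trans ?_
        rw [hpow]
        have : u ^ 2 * u ^ (m - 2) / 2 = u ^ 2 / 2 * u ^ (m - 2) := by ring
        rw [this]
        gcongr
      have hgeo : ∑ m ∈ Finset.Ico 2 n, u ^ 2 / 2 * b ^ (m - 2) ≤ u ^ 2 / (2 * (1 - b)) := by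
        rw [← Finset.mul_sum]
        have : ∑ m ∈ Finset.Ico 2 n, b ^ (m - 2) = ∑ j ∈ Finset.range (n - 2), b ^ j := by
          rw [Finset.sum_Ico_eq_sum_range]
          exact Finset.sum_congr rfl fun j _ => by congr 1; omega
        rw [this]
        have hsum : ∑ j ∈ Finset.range (n - 2), b ^ j ≤ (1 - b)⁻¹ := by
          calc ∑ j ∈ Finset.range (n - 2), b ^ j ≤ ∑' j : ℕ, b ^ j :=
                Summable.sum_le_tsum _ (fun i _ => pow_nonneg hb0 i)
                  (summable_geometric_of_lt_one hb0 hb)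
            _ = (1 - b)⁻¹ := tsum_geometric_of_lt_one hb0 hb
        calc u ^ 2 / 2 * ∑ j ∈ Finset.range (n - 2), b ^ j
            ≤ u ^ 2 / 2 * (1 - b)⁻¹ := by gcongr
          _ = u ^ 2 / (2 * (1 - b)) := by field_simp
      have hrem : u ^ n * (n + 1) / (n.factorial * n) ≤ 2 * u ^ n := by
        have hfac1 : (1 : ℝ) ≤ n.factorial := by exact_mod_cast Nat.one_le_iff_ne_zero.mpr n.factorial_ne_zero
        have hn1 : (2 : ℝ) ≤ n := by exact_mod_cast hn
        have hpos : (0:ℝ) < n.factorial * n := by positivity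
        rw [div_le_iff₀ hpos]
        have hun : 0 ≤ u ^ n := pow_nonneg hu0 n
        nlinarith [mul_le_mul_of_nonneg_left (mul_le_mul hfac1 hn1 (by norm_num) (le_trans (by norm_num) hfac1)) hun]
      calc Real.exp u ≤ (∑ m ∈ Finset.range n, u ^ m / m.factorial)
            + u ^ n * (n + 1) / (n.factorial * n) := hb'
        _ = (1 + u) + (∑ m ∈ Finset.Ico 2 n, u ^ m / m.factorial)
            + u ^ n * (n + 1) / (n.factorial * n) := by rw [hsplit]
        _ ≤ (1 + u) + u ^ 2 / (2 * (1 - b)) + 2 * u ^ n := by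
            refine add_le_add (add_le_add le_rfl ((Finset.sum_le_sum hterm).trans hgeo)) hrem
        _ = 1 + u + u ^ 2 / (2 * (1 - b)) + 2 * u ^ n := by ring
    have hu1' : u < 1 := lt_of_le_of_lt hub' hb
    have htend : Filter.Tendsto (fun n : ℕ => 1 + u + u ^ 2 / (2 * (1 - b)) + 2 * u ^ n)
        Filter.atTop (nhds (1 + u + u ^ 2 / (2 * (1 - b)) + 2 * 0)) := by
      exact Filter.Tendsto.add tendsto_const_nhds
        ((tendsto_pow_atTop_nhds_zero_of_lt_one (by linarith) hu1').const_mul 2)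
    have hle : Real.exp u ≤ 1 + u + u ^ 2 / (2 * (1 - b)) + 2 * 0 := by
      refine ge_of_tendsto htend ?_
      filter_upwards [Filter.eventually_ge_atTop 2] with n hn using key n hn
    simpa using hle

lemma freedman_onesided {Ω : Type*} {m0 : MeasurableSpace Ω} {μ : Measure Ω}
    [IsProbabilityMeasure μ] (F : Filtration ℕ m0)
    (M : ℕ → Ω → ℝ) (hM : Martingale M F μ) (hM0 : ∀ ω, M 0 ω = 0)
    (A : ℝ) (hA : 0 < A)
    (hbdd : ∀ n, ∀ᵐ ω ∂μ, |M (n + 1) ω - M n ω| ≤ A)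
    (V : ℕ → Ω → ℝ)
    (hV : ∀ n ω, V n ω =
      ∑ k ∈ Finset.range n, (μ[fun ω' => (M (k + 1) ω' - M k ω') ^ 2 | F k]) ω)
    (δ ρ : ℝ) (hδ : 0 < δ) (hρ : 0 < ρ) (N : ℕ) :
    μ {ω | (∃ n ≤ N, δ ≤ M n ω) ∧ V N ω < ρ} ≤
      ENNReal.ofReal (Real.exp (-δ ^ 2 / (2 * (A * δ + ρ)))) := by
  have hAδρ : 0 < A * δ + ρ := by positivity
  set l : ℝ := δ / (A * δ + ρ) with hl_def
  set c : ℝ := l ^ 2 * (A * δ + ρ) / (2 * ρ) with hc_def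
  have hl : 0 < l := by positivity
  have hc : 0 < c := by positivity
  have hlA : l * A < 1 := by
    rw [hl_def, div_mul_eq_mul_div, div_lt_one hAδρ]
    nlinarith
  have hlA0 : 0 ≤ l * A := by positivity
  -- pointwise quadratic bound
  have hquad : ∀ x : ℝ, |x| ≤ A → Real.exp (l * x) ≤ 1 + l * x + c * x ^ 2 := by
    intro x hx
    have h1 : |l * x| ≤ l * A := by
      rw [abs_mul, abs_of_pos hl]
      exact mul_le_mul_of_nonneg_left hx hl.le
    have h2 := exp_le_quad hlA h1
    have h3 : (l * x) ^ 2 / (2 * (1 - l * A)) = c * x ^ 2 := by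
      have h1b : 1 - l * A = ρ / (A * δ + ρ) := by
        rw [hl_def]; field_simp; ring
      rw [h1b, hc_def, hl_def]
      field_simp
    rw [h3] at h2
    exact h2
  -- the exponential process
  set Z : ℕ → Ω → ℝ := fun n ω => Real.exp (l * M n ω - c * V n ω) with hZ_def
  have hZpos : ∀ n ω, 0 < Z n ω := fun n ω => Real.exp_pos _
  -- measurability
  have hVsm : ∀ n, StronglyMeasurable[F n] (V n) := by
    intro n
    have : V n = fun ω => ∑ k ∈ Finset.range n,
        (μ[fun ω' => (M (k + 1) ω' - M k ω') ^ 2 | F k]) ω := funext (hV n)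
    rw [this]
    apply Finset.stronglyMeasurable_fun_sum
    intro k hk
    exact stronglyMeasurable_condExp.mono (F.mono (Finset.mem_range.mp hk).le)
  have hZsm : ∀ n, StronglyMeasurable[F n] (Z n) := by
    intro n
    exact Real.continuous_exp.comp_stronglyMeasurable
      (((hM.stronglyAdapted n).const_mul l).sub ((hVsm n).const_mul c))
  -- a.e. bounds
  have hΔsq_int : ∀ k, Integrable (fun ω => (M (k + 1) ω - M k ω) ^ 2) μ := by
    intro k
    refine Integrable.mono' (integrable_const (A ^ 2))
      ((((hM.stronglyMeasurable (k+1)).mono (F.le _)).sub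
        ((hM.stronglyMeasurable k).mono (F.le _))).pow 2).aestronglyMeasurable ?_
    filter_upwards [hbdd k] with ω hω
    rw [Real.norm_eq_abs, abs_of_nonneg (sq_nonneg _)]
    calc (M (k+1) ω - M k ω) ^ 2 = |M (k+1) ω - M k ω| ^ 2 := (sq_abs _).symm
      _ ≤ A ^ 2 := by gcongr
  have hWnn : ∀ k, ∀ᵐ ω ∂μ, 0 ≤ (μ[fun ω' => (M (k + 1) ω' - M k ω') ^ 2 | F k]) ω :=
    fun k => condExp_nonneg (Filter.Eventually.of_forall fun ω => sq_nonneg _)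
  have hVnn : ∀ n, ∀ᵐ ω ∂μ, 0 ≤ V n ω := by
    intro n
    have := ae_all_iff.mpr hWnn
    filter_upwards [this] with ω hω
    rw [hV n]
    exact Finset.sum_nonneg fun k _ => hω k
  have hMbd : ∀ n, ∀ᵐ ω ∂μ, |M n ω| ≤ n * A := by
    intro n
    induction n with
    | zero => exact Filter.Eventually.of_forall fun ω => by simp [hM0 ω]
    | succ n ih =>
      filter_upwards [ih, hbdd n] with ω h1 h2
      have : |M (n+1) ω| ≤ |M n ω| + |M (n+1) ω - M n ω| := by
        calc |M (n+1) ω| = |M n ω + (M (n+1) ω - M n ω)| := by ring_nf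
          _ ≤ |M n ω| + |M (n+1) ω - M n ω| := abs_add_le _ _
      push_cast
      nlinarith
  have hZbd : ∀ n, ∀ᵐ ω ∂μ, Z n ω ≤ Real.exp (l * (n * A)) := by
    intro n
    filter_upwards [hMbd n, hVnn n] with ω h1 h2
    apply Real.exp_le_exp.mpr
    have : M n ω ≤ n * A := (le_abs_self _).trans h1
    nlinarith
  have hZint : ∀ n, Integrable (Z n) μ := by
    intro n
    refine Integrable.mono' (integrable_const (Real.exp (l * (n * A))))
      ((hZsm n).mono (F.le n)).aestronglyMeasurable ?_
    filter_upwards [hZbd n] with ω hω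
    rw [Real.norm_eq_abs, abs_of_pos (hZpos n ω)]
    exact hω
  -- supermartingale property
  have hsuper : Supermartingale Z F μ := by
    refine supermartingale_nat (fun n => hZsm n) hZint (fun n => ?_)
    set D : Ω → ℝ := fun ω => M (n + 1) ω - M n ω with hD_def
    set W : Ω → ℝ := μ[fun ω' => (M (n + 1) ω' - M n ω') ^ 2 | F n] with hW_def
    have hWsm : StronglyMeasurable[F n] W := stronglyMeasurable_condExp
    have hVsucc : ∀ ω, V (n + 1) ω = V n ω + W ω := by
      intro ω
      rw [hV (n + 1), hV n, Finset.sum_range_succ]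
    set G : Ω → ℝ := fun ω => Real.exp (l * M n ω - c * V n ω - c * W ω) with hG_def
    set g : Ω → ℝ := fun ω => Real.exp (l * D ω) with hg_def
    have hZsplit : Z (n + 1) = G * g := by
      funext ω
      show Real.exp _ = G ω * g ω
      rw [hG_def, hg_def]
      simp only
      rw [← Real.exp_add]
      congr 1
      rw [hVsucc ω]
      simp only [hD_def]
      ring
    have hGsm : StronglyMeasurable[F n] G :=
      Real.continuous_exp.comp_stronglyMeasurable
        (((((hM.stronglyAdapted n).const_mul l)).sub ((hVsm n).const_mul c)).sub (hWsm.const_mul c))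
    have hgsm : StronglyMeasurable (fun ω => Real.exp (l * D ω)) :=
      Real.continuous_exp.comp_stronglyMeasurable
        ((((hM.stronglyMeasurable (n+1)).mono (F.le _)).sub
          ((hM.stronglyMeasurable n).mono (F.le _))).const_mul l)
    have hgbd : ∀ᵐ ω ∂μ, ‖g ω‖ ≤ Real.exp (l * A) := by
      filter_upwards [hbdd n] with ω hω
      rw [hg_def]
      simp only [Real.norm_eq_abs, abs_of_pos (Real.exp_pos _)]
      apply Real.exp_le_exp.mpr
      have : D ω ≤ A := (le_abs_self _).trans hω
      nlinarith
    have hgint : Integrable g μ :=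
      Integrable.mono' (integrable_const (Real.exp (l * A))) hgsm.aestronglyMeasurable hgbd
    have hGg_int : Integrable (G * g) μ := by rw [← hZsplit]; exact hZint (n + 1)
    have hpull : μ[G * g | F n] =ᵐ[μ] G * μ[g | F n] :=
      condExp_mul_of_stronglyMeasurable_left hGsm hGg_int hgint
    -- bound the conditional expectation of g
    have hDint : Integrable D μ := (hM.integrable (n+1)).sub (hM.integrable n)
    have hDsq_int : Integrable (fun ω => D ω ^ 2) μ := hΔsq_int n
    have hfint : Integrable (fun ω => 1 + (l * D ω + c * D ω ^ 2)) μ :=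
      (integrable_const 1).add ((hDint.const_mul l).add (hDsq_int.const_mul c))
    have hgle : g ≤ᵐ[μ] fun ω => 1 + (l * D ω + c * D ω ^ 2) := by
      filter_upwards [hbdd n] with ω hω
      have := hquad (D ω) hω
      rw [hg_def]
      simp only
      linarith
    have hcondD : μ[D | F n] =ᵐ[μ] 0 := by
      have h1 : μ[D | F n] =ᵐ[μ] μ[M (n+1) | F n] - μ[M n | F n] :=
        condExp_sub (hM.integrable (n+1)) (hM.integrable n) _
      have h2 := hM.condExp_ae_eq (Nat.le_succ n)
      have h3 := hM.condExp_ae_eq (le_refl n)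
      filter_upwards [h1, h2, h3] with ω e1 e2 e3
      simp only [Pi.sub_apply, Pi.zero_apply] at *
      rw [e1, e2, e3]
      ring
    have hcondf : μ[fun ω => 1 + (l * D ω + c * D ω ^ 2) | F n]
        =ᵐ[μ] fun ω => 1 + c * W ω := by
      have e0 : (fun ω => 1 + (l * D ω + c * D ω ^ 2))
          = (fun _ : Ω => (1:ℝ)) + (l • D + c • fun ω => D ω ^ 2) := rfl
      rw [e0]
      have e1 := condExp_add (μ := μ) (m := F n) (integrable_const (1:ℝ))
        ((hDint.const_mul l).add (hDsq_int.const_mul c))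
      have e2 := condExp_add (μ := μ) (m := F n) (hDint.smul l) (hDsq_int.smul c)
      have e3 := condExp_smul (μ := μ) (m := F n) l D
      have e4 := condExp_smul (μ := μ) (m := F n) c (fun ω => D ω ^ 2)
      have e5 := condExp_const (F.le n) (1:ℝ) (μ := μ)
      filter_upwards [e1, e2, e3, e4, hcondD] with ω h1 h2 h3 h4 h5
      have : (l • D + c • fun ω => D ω ^ 2) = (l • D) + (c • fun ω => D ω ^ 2) := rfl
      calc (μ[(fun _ : Ω => (1:ℝ)) + (l • D + c • fun ω => D ω ^ 2)|F n]) ω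
          = (μ[(fun _ : Ω => (1:ℝ))|F n]) ω + (μ[l • D + c • fun ω => D ω ^ 2|F n]) ω := h1
        _ = 1 + ((μ[l • D|F n]) ω + (μ[c • fun ω => D ω ^ 2|F n]) ω) := by
            rw [e5]; simp only [Pi.add_apply] at h2 ⊢; rw [h2]
        _ = 1 + (l * (μ[D|F n]) ω + c * (μ[fun ω => D ω ^ 2|F n]) ω) := by
            rw [h3, h4]; simp
        _ = 1 + c * W ω := by rw [h5]; simp [hW_def, hD_def]
    have hcondg : μ[g | F n] ≤ᵐ[μ] fun ω => 1 + c * W ω :=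
      (condExp_mono hgint hfint hgle).trans hcondf.le
    -- conclude
    have hWcond : μ[g | F n] ≤ᵐ[μ] fun ω => Real.exp (c * W ω) := by
      filter_upwards [hcondg] with ω hω
      exact hω.trans (by linarith [Real.add_one_le_exp (c * W ω)])
    calc μ[Z (n+1) | F n] =ᵐ[μ] G * μ[g | F n] := by rw [hZsplit]; exact hpull
      _ ≤ᵐ[μ] Z n := by
        filter_upwards [hWcond] with ω hω
        show G ω * (μ[g | F n]) ω ≤ Z n ω
        have hGpos : 0 < G ω := Real.exp_pos _
        calc G ω * (μ[g | F n]) ω ≤ G ω * Real.exp (c * W ω) := by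
              exact mul_le_mul_of_nonneg_left hω hGpos.le
          _ = Z n ω := by
              rw [hG_def]; simp only [hZ_def]
              rw [← Real.exp_add]; congr 1; ring
  -- maximal/stopping argument
  set ε₀ : ℝ := Real.exp (l * δ - c * ρ) with hε₀_def
  have hε₀ : 0 < ε₀ := Real.exp_pos _
  set S : Set Ω :=
    {ω | ε₀ ≤ (Finset.range (N + 1)).sup' nonempty_range_add_one fun k => Z k ω} with hS_def
  have hSM : MeasurableSet S :=
    measurableSet_le measurable_const
      (Finset.measurable_range_sup'' fun k _ => ((hZsm k).measurable).le (F.le k))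
  set τ : Ω → WithTop ℕ := fun ω => ((hittingBtwn Z (Set.Ici ε₀) 0 N ω : ℕ) : WithTop ℕ) with hτ_def
  have hτ : IsStoppingTime F τ := hsuper.stronglyAdapted.adapted.isStoppingTime_hittingBtwn measurableSet_Ici
  have hτle : ∀ ω, τ ω ≤ N := fun ω => by simp only [hτ_def]; exact_mod_cast (hittingBtwn_le (u := Z) (s := Set.Ici ε₀) (n := 0) (m := N) ω)
  have hnegstop : stoppedValue (-Z) τ = -(stoppedValue Z τ) := by
    funext ω; simp [stoppedValue]
  have hstop : Integrable (stoppedValue Z τ) μ := by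
    have h1 := (hsuper.neg).integrable_stoppedValue hτ hτle
    rw [hnegstop] at h1
    simpa using h1.neg
  have hSb : ∀ ω ∈ S, ε₀ ≤ stoppedValue Z τ ω := by
    intro ω hω
    rw [hS_def, Set.mem_setOf_eq, Finset.le_sup'_iff] at hω
    obtain ⟨k, hk, hks⟩ := hω
    exact stoppedValue_hittingBtwn_mem
      ⟨k, ⟨Nat.zero_le _, Nat.lt_succ_iff.mp (Finset.mem_range.mp hk)⟩, hks⟩
  have h1 : ε₀ * (μ S).toReal ≤ ∫ ω in S, stoppedValue Z τ ω ∂μ :=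
    setIntegral_ge_of_const_le_real hSM (measure_ne_top μ S) hSb hstop.integrableOn
  have h2 : ∫ ω in S, stoppedValue Z τ ω ∂μ ≤ ∫ ω, stoppedValue Z τ ω ∂μ :=
    setIntegral_le_integral hstop (Filter.Eventually.of_forall fun ω => (hZpos _ _).le)
  have hZ0 : ∀ ω, Z 0 ω = 1 := by
    intro ω
    rw [hZ_def]
    simp [hM0 ω, hV 0 ω]
  have h3 : ∫ ω, stoppedValue Z τ ω ∂μ ≤ 1 := by
    have hmono := Submartingale.expected_stoppedValue_mono hsuper.neg
      (isStoppingTime_const F 0) hτ (fun ω => by simp only [hτ_def]; exact WithTop.coe_le_coe.mpr (Nat.zero_le (hittingBtwn Z (Set.Ici ε₀) 0 N ω))) hτle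
    have e0 : stoppedValue (-Z) (fun _ => WithTop.some (0 : ℕ)) = fun _ : Ω => (-1 : ℝ) := by
      funext ω; simp [stoppedValue, hZ0 ω]
    rw [e0, hnegstop, integral_neg] at hmono
    simp only [integral_neg', integral_neg, integral_const, measure_univ,
      ENNReal.toReal_one, smul_eq_mul, one_mul, probReal_univ] at hmono
    linarith
  have htoReal : (μ S).toReal ≤ Real.exp (-(l * δ - c * ρ)) := by
    have key : ε₀ * (μ S).toReal ≤ 1 := h1.trans (h2.trans h3)
    have h4 : (μ S).toReal ≤ ε₀⁻¹ := by
      rw [← one_div, le_div_iff₀ hε₀]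
      linarith [key]
    rw [Real.exp_neg, ← hε₀_def]
    exact h4
  -- event inclusion
  have hsub : {ω | (∃ n ≤ N, δ ≤ M n ω) ∧ V N ω < ρ} ≤ᵐ[μ] S := by
    filter_upwards [ae_all_iff.mpr hWnn] with ω hω
    show ω ∈ {ω | (∃ n ≤ N, δ ≤ M n ω) ∧ V N ω < ρ} → ω ∈ S
    rintro ⟨⟨n, hn, hδn⟩, hVρ⟩
    have hVle : V n ω ≤ V N ω := by
      rw [hV n, hV N]
      exact Finset.sum_le_sum_of_subset_of_nonneg
        (Finset.range_subset_range.mpr hn) (fun k _ _ => hω k)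
    have hZn : ε₀ ≤ Z n ω := by
      rw [hε₀_def, hZ_def]
      apply Real.exp_le_exp.mpr
      have h5 : V n ω < ρ := lt_of_le_of_lt hVle hVρ
      nlinarith
    exact (Finset.le_sup'_iff nonempty_range_add_one (f := fun k => Z k ω)).mpr ⟨n, Finset.mem_range.mpr (Nat.lt_succ_of_le hn), hZn⟩
  calc μ {ω | (∃ n ≤ N, δ ≤ M n ω) ∧ V N ω < ρ} ≤ μ S := measure_mono_ae hsub
    _ = ENNReal.ofReal (μ S).toReal := (ENNReal.ofReal_toReal (measure_ne_top μ S)).symm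
    _ ≤ ENNReal.ofReal (Real.exp (-(l * δ - c * ρ))) := ENNReal.ofReal_le_ofReal htoReal
    _ = ENNReal.ofReal (Real.exp (-δ ^ 2 / (2 * (A * δ + ρ)))) := by
        congr 2
        rw [hc_def, hl_def]
        field_simp
        ring


theorem stmt_2 {Ω : Type*} {m0 : MeasurableSpace Ω} {μ : Measure Ω}
    [IsProbabilityMeasure μ] (F : Filtration ℕ m0)
    (M : ℕ → Ω → ℝ) (hM : Martingale M F μ) (hM0 : ∀ ω, M 0 ω = 0)
    (A : ℝ) (hA : 0 < A)
    (hbdd : ∀ n, ∀ᵐ ω ∂μ, |M (n + 1) ω - M n ω| ≤ A)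
    (V : ℕ → Ω → ℝ)
    (hV : ∀ n ω, V n ω =
      ∑ k ∈ Finset.range n, (μ[fun ω' => (M (k + 1) ω' - M k ω') ^ 2 | F k]) ω)
    (δ ρ : ℝ) (hδ : 0 < δ) (hρ : 0 < ρ) (N : ℕ) :
    μ {ω | (∃ n ≤ N, δ ≤ |M n ω|) ∧ V N ω < ρ} ≤
      ENNReal.ofReal (2 * Real.exp (-δ ^ 2 / (2 * (A * δ + ρ)))) := by
  have h1 := freedman_onesided F M hM hM0 A hA hbdd V hV δ ρ hδ hρ N
  have hbdd' : ∀ n, ∀ᵐ ω ∂μ, |(-M) (n + 1) ω - (-M) n ω| ≤ A := by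
    intro n
    filter_upwards [hbdd n] with ω hω
    have : (-M) (n + 1) ω - (-M) n ω = -(M (n + 1) ω - M n ω) := by
      simp [Pi.neg_apply]; ring
    rw [this, abs_neg]
    exact hω
  have e : ∀ k : ℕ, (fun ω' => ((-M) (k + 1) ω' - (-M) k ω') ^ 2)
      = (fun ω' => (M (k + 1) ω' - M k ω') ^ 2) := by
    intro k
    funext ω'
    simp only [Pi.neg_apply]
    ring
  have hV' : ∀ n ω, V n ω =
      ∑ k ∈ Finset.range n, (μ[fun ω' => ((-M) (k + 1) ω' - (-M) k ω') ^ 2 | F k]) ω := by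
    intro n ω
    rw [hV n ω]
    refine Finset.sum_congr rfl fun k _ => ?_
    rw [e k]
  have h2 := freedman_onesided F (-M) hM.neg (fun ω => by simp [hM0 ω]) A hA hbdd' V hV'
    δ ρ hδ hρ N
  have hunion : {ω | (∃ n ≤ N, δ ≤ |M n ω|) ∧ V N ω < ρ} ⊆
      {ω | (∃ n ≤ N, δ ≤ M n ω) ∧ V N ω < ρ} ∪
      {ω | (∃ n ≤ N, δ ≤ (-M) n ω) ∧ V N ω < ρ} := by
    rintro ω ⟨⟨n, hn, habs⟩, hVρ⟩
    rcases le_abs.mp habs with h | h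
    · exact Or.inl ⟨⟨n, hn, h⟩, hVρ⟩
    · exact Or.inr ⟨⟨n, hn, by simpa using h⟩, hVρ⟩
  calc μ {ω | (∃ n ≤ N, δ ≤ |M n ω|) ∧ V N ω < ρ}
      ≤ μ ({ω | (∃ n ≤ N, δ ≤ M n ω) ∧ V N ω < ρ} ∪
          {ω | (∃ n ≤ N, δ ≤ (-M) n ω) ∧ V N ω < ρ}) := measure_mono hunion
    _ ≤ μ {ω | (∃ n ≤ N, δ ≤ M n ω) ∧ V N ω < ρ}
        + μ {ω | (∃ n ≤ N, δ ≤ (-M) n ω) ∧ V N ω < ρ} := measure_union_le _ _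
    _ ≤ ENNReal.ofReal (Real.exp (-δ ^ 2 / (2 * (A * δ + ρ))))
        + ENNReal.ofReal (Real.exp (-δ ^ 2 / (2 * (A * δ + ρ)))) := add_le_add h1 h2
    _ = ENNReal.ofReal (2 * Real.exp (-δ ^ 2 / (2 * (A * δ + ρ)))) := by
        rw [← ENNReal.ofReal_add (Real.exp_pos _).le (Real.exp_pos _).le]
        congr 1
        ring
end
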